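/- Conversely, if {P_j} are positive semidefinite operators on H_out ⊗ H_in such that Σ_j Tr[E P_j] = 1 for every Choi operator E of a channel, then Σ_j P_j = I_{H_out} ⊗ σ for some density matrix σ on H_in. -/

import Mathlib

open Matrix Kronecker BigOperators ComplexOrder

/-- Partial trace over the first tensor factor. -/
noncomputable def ptrFst {o i : Type*} [Fintype o] (M : Matrix (o × i) (o × i) ℂ) :
    Matrix i i ℂ :=
  Matrix.of fun a b => ∑ k, M (k, a) (k, b)

/-- Partial trace over the second tensor factor. -/
noncomputable def ptrSnd {o i : Type*} [Fintype i] (M : Matrix (o × i) (o × i) ℂ) :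
    Matrix o o ℂ :=
  Matrix.of fun a b => ∑ k, M (a, k) (b, k)

/-- Choi operator of a linear map between matrix algebras. -/
noncomputable def choi {i o : Type*} [Fintype i] [DecidableEq i]
    (E : Matrix i i ℂ →ₗ[ℂ] Matrix o o ℂ) : Matrix (o × i) (o × i) ℂ :=
  ∑ m, ∑ n, (E (Matrix.single m n 1)) ⊗ₖ (Matrix.single m n 1)

/-- Complete positivity, expressed via existence of a Kraus decomposition
(equivalent to the usual definition in finite dimensions). -/
def IsCP {i o : Type*} [Fintype i] [Fintype o]
    (E : Matrix i i ℂ →ₗ[ℂ] Matrix o o ℂ) : Prop :=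
  ∃ (k : ℕ) (K : Fin k → Matrix o i ℂ), ∀ X, E X = ∑ j, K j * X * (K j)ᴴ

lemma std_mulVec {α : Type*} [Fintype α] [DecidableEq α] (p q : α) (x : α → ℂ) :
    (Matrix.single p q (1:ℂ)) *ᵥ x = Pi.single p (x q) := by
  ext r
  simp [Matrix.mulVec, dotProduct, Matrix.single, Pi.single_apply, ite_and, eq_comm]

lemma std_conjTranspose {α : Type*} [DecidableEq α] (p q : α) :
    (Matrix.single p q (1:ℂ))ᴴ = Matrix.single q p 1 := by
  ext r s
  simp [Matrix.single, conjTranspose_apply, apply_ite (starRingEnd ℂ), and_comm]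

lemma quad_gadget {α : Type*} [Fintype α] [DecidableEq α]
    (p q p' q' : α) (ε : ℝ) (c d : ℂ)
    (h : 2 * (‖c‖ + ‖d‖) ≤ ε) :
    (((ε : ℂ) • (1 : Matrix α α ℂ)) + (c • Matrix.single p q 1
      + (starRingEnd ℂ c) • Matrix.single q p 1
      + d • Matrix.single p' q' 1
      + (starRingEnd ℂ d) • Matrix.single q' p' 1)).PosSemidef := by
  have hεnn : 0 ≤ ε := le_trans (by positivity) h
  rw [posSemidef_iff_dotProduct_mulVec]
  constructor
  · -- Hermitian
    show _ᴴ = _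
    simp only [conjTranspose_add, conjTranspose_smul, conjTranspose_one, std_conjTranspose,
      RCLike.star_def, Complex.conj_ofReal, Complex.conj_conj]
    abel
  · intro x
    have expand : star x ⬝ᵥ ((((ε : ℂ) • (1 : Matrix α α ℂ)) + (c • Matrix.single p q 1
      + (starRingEnd ℂ c) • Matrix.single q p 1
      + d • Matrix.single p' q' 1
      + (starRingEnd ℂ d) • Matrix.single q' p' 1)) *ᵥ x)
        = (ε : ℂ) * (star x ⬝ᵥ x)
          + (c * (star x p * x q) + starRingEnd ℂ (c * (star x p * x q)))
          + (d * (star x p' * x q') + starRingEnd ℂ (d * (star x p' * x q'))) := by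
      simp only [add_mulVec, smul_mulVec, one_mulVec, dotProduct_add, dotProduct_smul,
        std_mulVec, dotProduct_single, smul_eq_mul, _root_.map_mul, RCLike.star_def]
      ring_nf
      simp [Complex.conj_conj]
      ring
    rw [expand]
    have hS : star x ⬝ᵥ x = ((∑ r, Complex.normSq (x r) : ℝ) : ℂ) := by
      push_cast
      simp [dotProduct, Complex.normSq_eq_conj_mul_self]
    rw [hS, Complex.add_conj, Complex.add_conj]
    have : (ε : ℂ) * ((∑ r, Complex.normSq (x r) : ℝ) : ℂ)
        + (2 * (c * (star x p * x q)).re : ℝ)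
        + (2 * (d * (star x p' * x q')).re : ℝ)
        = ((ε * (∑ r, Complex.normSq (x r)) + 2 * (c * (star x p * x q)).re
            + 2 * (d * (star x p' * x q')).re : ℝ) : ℂ) := by push_cast; ring
    rw [this]
    rw [Complex.zero_le_real]
    set S : ℝ := ∑ r, Complex.normSq (x r) with hSdef
    have hSnn : 0 ≤ S := Finset.sum_nonneg fun r _ => Complex.normSq_nonneg _
    have hbound : ∀ (e : ℂ) (u v : α), -(‖e‖ * S) ≤ (e * (star x u * x v)).re := by
      intro e u v
      have h1 : Complex.normSq (x u) ≤ S :=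
        Finset.single_le_sum (fun r _ => Complex.normSq_nonneg _) (Finset.mem_univ u)
      have h2 : Complex.normSq (x v) ≤ S :=
        Finset.single_le_sum (fun r _ => Complex.normSq_nonneg _) (Finset.mem_univ v)
      have h3 := (abs_le.mp (Complex.abs_re_le_norm (e * (star x u * x v)))).1
      have h4 : ‖e * (star x u * x v)‖
          = ‖e‖ * (‖x u‖ * ‖x v‖) := by
        simp [_root_.map_mul, RCLike.star_def]
      have h5 : ‖x u‖ * ‖x v‖ ≤ S := by
        nlinarith [Complex.sq_norm (x u), Complex.sq_norm (x v), norm_nonneg (x u),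
          norm_nonneg (x v), sq_nonneg (‖x u‖ - ‖x v‖)]
      nlinarith [norm_nonneg e]
    have hb1 := hbound c p q
    have hb2 := hbound d p' q'
    nlinarith [norm_nonneg c, norm_nonneg d]

lemma ptrFst_add {o i : Type*} [Fintype o] (M N : Matrix (o × i) (o × i) ℂ) :
    ptrFst (M + N) = ptrFst M + ptrFst N := by
  ext a b; simp [ptrFst, Finset.sum_add_distrib]

lemma ptrFst_smul {o i : Type*} [Fintype o] (c : ℂ) (M : Matrix (o × i) (o × i) ℂ) :
    ptrFst (c • M) = c • ptrFst M := by
  ext a b; simp [ptrFst, Finset.mul_sum]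

lemma ptrFst_one {o i : Type*} [Fintype o] [Fintype i] [DecidableEq i] [DecidableEq o] :
    ptrFst (1 : Matrix (o × i) (o × i) ℂ) = (Fintype.card o : ℂ) • 1 := by
  ext a b
  by_cases h : a = b <;>
    simp [ptrFst, Matrix.one_apply, Prod.ext_iff, h]

lemma ptrFst_std {o i : Type*} [Fintype o] [Fintype i] [DecidableEq i] [DecidableEq o]
    (a b : o) (m n : i) :
    ptrFst (Matrix.single (a, m) (b, n) (1:ℂ))
      = if a = b then Matrix.single m n 1 else 0 := by
  ext x y
  by_cases h : a = b
  · simp [ptrFst, Matrix.single, Prod.ext_iff, h, Finset.sum_ite_eq, ite_and, and_comm,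
      and_assoc, and_left_comm]
  · rw [if_neg h]
    show (∑ k, _) = (0 : Matrix i i ℂ) x y
    rw [Matrix.zero_apply]
    apply Finset.sum_eq_zero
    intro c _
    simp only [Matrix.single, of_apply, Prod.ext_iff, ite_and]
    split_ifs <;> simp_all

lemma ptrFst_std_same {o i : Type*} [Fintype o] [Fintype i] [DecidableEq i] [DecidableEq o]
    (a : o) (m n : i) :
    ptrFst (Matrix.single (a, m) (a, n) (1:ℂ)) = Matrix.single m n 1 := by
  rw [ptrFst_std, if_pos rfl]

lemma trace_std_mul {α : Type*} [Fintype α] [DecidableEq α] (p q : α) (C : Matrix α α ℂ) :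
    (Matrix.single p q (1:ℂ) * C).trace = C q p := by
  simp [Matrix.trace, Matrix.diag, Matrix.mul_apply, Matrix.single, ite_and,
    Finset.sum_ite_eq, eq_comm]

/-- Conversely, if `{P j} ≥ 0` and `Σ_j Tr[E P_j] = 1` for every channel
Choi operator `E`, then `Σ_j P j = I ⊗ σ` for some density matrix `σ`. -/
theorem tester_normalization_converse {i o : Type*}
    [Fintype i] [DecidableEq i] [Fintype o] [DecidableEq o] [Nonempty o]
    {k : ℕ} (P : Fin k → Matrix (o × i) (o × i) ℂ)
    (hP : ∀ j, (P j).PosSemidef)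
    (hnorm : ∀ E : Matrix (o × i) (o × i) ℂ, E.PosSemidef → ptrFst E = 1 →
      ∑ j, (E * P j).trace = 1) :
    ∃ σ : Matrix i i ℂ, σ.PosSemidef ∧ σ.trace = 1 ∧
      ∑ j, P j = (1 : Matrix o o ℂ) ⊗ₖ σ := by
  classical
  obtain ⟨a0⟩ := (inferInstance : Nonempty o)
  by_cases hi : Nonempty i
  swap
  · exfalso
    have h0 := hnorm 0 Matrix.PosSemidef.zero (by ext a b; exact absurd ⟨a⟩ hi)
    simp at h0
  obtain ⟨m0⟩ := hi
  have hoc : (0:ℝ) < (Fintype.card o : ℝ) := by exact_mod_cast Fintype.card_pos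
  set ε : ℝ := (Fintype.card o : ℝ)⁻¹ with hεdef
  have hε : 0 < ε := by positivity
  set C : Matrix (o × i) (o × i) ℂ := ∑ j, P j with hCdef
  have hCps : C.PosSemidef := by
    apply Finset.sum_induction P Matrix.PosSemidef (fun A B hA hB => hA.add hB)
      Matrix.PosSemidef.zero
    exact fun j _ => hP j
  have hC : ∀ E : Matrix (o × i) (o × i) ℂ, E.PosSemidef → ptrFst E = 1 → (E * C).trace = 1 := by
    intro E h1 h2
    rw [hCdef, Finset.mul_sum, Matrix.trace_sum]
    exact hnorm E h1 h2
  have hcast : ((ε:ℝ):ℂ) * (Fintype.card o : ℂ) = 1 := by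
    rw [hεdef]; push_cast; field_simp
  have hptrE0 : ptrFst ((ε:ℂ) • (1 : Matrix (o × i) (o × i) ℂ)) = 1 := by
    rw [ptrFst_smul, ptrFst_one, smul_smul, hcast, one_smul]
  have hE0psd : ((ε:ℂ) • (1 : Matrix (o × i) (o × i) ℂ)).PosSemidef := by
    have := quad_gadget (α := o × i) (a0, m0) (a0, m0) (a0, m0) (a0, m0) ε 0 0
      (by simpa using hε.le)
    simpa using this
  have htrE0 : (((ε:ℂ) • (1 : Matrix (o × i) (o × i) ℂ)) * C).trace = (ε:ℂ) * C.trace := by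
    rw [Matrix.smul_mul, Matrix.trace_smul, smul_eq_mul, Matrix.one_mul]
  have hCtr : (ε:ℂ) * C.trace = 1 := by rw [← htrE0]; exact hC _ hE0psd hptrE0
  -- the basic probe equation
  have probe : ∀ (p q p' q' : o × i) (c d : ℂ),
      2 * (‖c‖ + ‖d‖) ≤ ε →
      ptrFst (c • Matrix.single p q 1
        + (starRingEnd ℂ c) • Matrix.single q p 1
        + d • Matrix.single p' q' 1
        + (starRingEnd ℂ d) • Matrix.single q' p' (1:ℂ)) = 0 →
      c * C q p + (starRingEnd ℂ c) * C p q + d * C q' p'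
        + (starRingEnd ℂ d) * C p' q' = 0 := by
    intro p q p' q' c d hle hptr
    have hpsd := quad_gadget p q p' q' ε c d hle
    have hptr1 : ptrFst ((ε:ℂ) • (1 : Matrix (o × i) (o × i) ℂ)
        + (c • Matrix.single p q 1
        + (starRingEnd ℂ c) • Matrix.single q p 1
        + d • Matrix.single p' q' 1
        + (starRingEnd ℂ d) • Matrix.single q' p' 1)) = 1 := by
      rw [ptrFst_add, hptr, add_zero, hptrE0]
    have h1 := hC _ hpsd hptr1
    rw [Matrix.add_mul, Matrix.trace_add, htrE0, hCtr] at h1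
    rw [Matrix.add_mul, Matrix.add_mul, Matrix.add_mul, Matrix.trace_add, Matrix.trace_add,
      Matrix.trace_add, Matrix.smul_mul, Matrix.smul_mul, Matrix.smul_mul, Matrix.smul_mul,
      Matrix.trace_smul, Matrix.trace_smul, Matrix.trace_smul, Matrix.trace_smul,
      trace_std_mul, trace_std_mul, trace_std_mul, trace_std_mul] at h1
    simpa [smul_eq_mul] using h1
  -- off-diagonal blocks vanish
  have habs1 : ‖((ε/4 : ℝ) : ℂ)‖ = ε/4 := by
    rw [Complex.norm_real, Real.norm_of_nonneg (by positivity)]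
  have habs2 : ‖((ε/4 : ℝ) : ℂ) * Complex.I‖ = ε/4 := by
    rw [norm_mul, Complex.norm_I, mul_one, habs1]
  have ht0 : (((ε/4 : ℝ)) : ℂ) ≠ 0 := by
    simp only [ne_eq, Complex.ofReal_eq_zero]
    positivity
  have htI0 : (((ε/4 : ℝ)) : ℂ) * Complex.I ≠ 0 :=
    mul_ne_zero ht0 Complex.I_ne_zero
  have key1 : ∀ (a b : o) (m n : i), a ≠ b → C (a, m) (b, n) = 0 := by
    intro a b m n hab
    have hp1 := probe (b, n) (a, m) (b, n) (a, m) ((ε/4 : ℝ) : ℂ) 0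
      (by rw [habs1]; simp only [norm_zero, add_zero]; linarith)
      (by simp only [map_zero, zero_smul, add_zero, ptrFst_add, ptrFst_smul,
            ptrFst_std, if_neg hab, if_neg (Ne.symm hab), smul_zero])
    have hp2 := probe (b, n) (a, m) (b, n) (a, m) (((ε/4 : ℝ) : ℂ) * Complex.I) 0
      (by rw [habs2]; simp only [norm_zero, add_zero]; linarith)
      (by simp only [map_zero, zero_smul, add_zero, ptrFst_add, ptrFst_smul,
            ptrFst_std, if_neg hab, if_neg (Ne.symm hab), smul_zero])
    simp only [map_zero, zero_mul, add_zero, zero_smul, _root_.map_mul, Complex.conj_ofReal,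
      Complex.conj_I, mul_neg] at hp1 hp2
    have E1 : C (a, m) (b, n) + C (b, n) (a, m) = 0 := by
      have h : (((ε/4 : ℝ)) : ℂ) * (C (a, m) (b, n) + C (b, n) (a, m)) = 0 := by
        linear_combination hp1
      exact (mul_eq_zero.mp h).resolve_left ht0
    have E2 : C (a, m) (b, n) - C (b, n) (a, m) = 0 := by
      have h : ((((ε/4 : ℝ)) : ℂ) * Complex.I)
          * (C (a, m) (b, n) - C (b, n) (a, m)) = 0 := by
        linear_combination hp2
      exact (mul_eq_zero.mp h).resolve_left htI0
    linear_combination (E1 + E2) / 2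
  -- diagonal blocks all equal
  have key2 : ∀ (a b : o) (m n : i), C (a, m) (a, n) = C (b, m) (b, n) := by
    intro a b m n
    have hp1 := probe (a, m) (a, n) (b, m) (b, n) ((ε/4 : ℝ) : ℂ) (-((ε/4 : ℝ) : ℂ))
      (by rw [norm_neg, habs1]; linarith)
      (by simp only [map_neg, Complex.conj_ofReal, _root_.map_mul, Complex.conj_I, mul_neg,
            neg_neg, ptrFst_add, ptrFst_smul, ptrFst_std_same]
          simp only [neg_smul]
          abel)
    have hp2 := probe (a, m) (a, n) (b, m) (b, n) (((ε/4 : ℝ) : ℂ) * Complex.I)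
      (-(((ε/4 : ℝ) : ℂ) * Complex.I))
      (by rw [norm_neg, habs2]; linarith)
      (by simp only [map_neg, Complex.conj_ofReal, _root_.map_mul, Complex.conj_I, mul_neg,
            neg_neg, ptrFst_add, ptrFst_smul, ptrFst_std_same]
          simp only [neg_smul]
          abel)
    simp only [map_neg, _root_.map_mul, Complex.conj_ofReal, Complex.conj_I, mul_neg,
      neg_neg, neg_mul] at hp1 hp2
    have E1 : C (a, n) (a, m) + C (a, m) (a, n) - C (b, n) (b, m) - C (b, m) (b, n) = 0 := by
      have h : (((ε/4 : ℝ)) : ℂ) * (C (a, n) (a, m) + C (a, m) (a, n)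
          - C (b, n) (b, m) - C (b, m) (b, n)) = 0 := by
        linear_combination hp1
      exact (mul_eq_zero.mp h).resolve_left ht0
    have E2 : C (a, n) (a, m) - C (a, m) (a, n) - C (b, n) (b, m) + C (b, m) (b, n) = 0 := by
      have h : ((((ε/4 : ℝ)) : ℂ) * Complex.I) * (C (a, n) (a, m) - C (a, m) (a, n)
          - C (b, n) (b, m) + C (b, m) (b, n)) = 0 := by
        linear_combination hp2
      exact (mul_eq_zero.mp h).resolve_left htI0
    linear_combination (E1 - E2) / 2
  -- the density matrix
  refine ⟨Matrix.of (fun m n => C (a0, m) (a0, n)), ?_, ?_, ?_⟩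
  · exact hCps.submatrix (fun m : i => (a0, m))
  · -- trace
    have h1 : C.trace = (Fintype.card o : ℂ)
        * (Matrix.of (fun m n => C (a0, m) (a0, n)) : Matrix i i ℂ).trace := by
      have hrow : ∀ a : o, ∑ m, C (a, m) (a, m)
          = (Matrix.of (fun m n => C (a0, m) (a0, n)) : Matrix i i ℂ).trace := by
        intro a
        rw [Matrix.trace]
        exact Finset.sum_congr rfl fun m _ => key2 a a0 m m
      rw [Matrix.trace]
      simp only [Matrix.diag]
      rw [Fintype.sum_prod_type]
      calc (∑ a : o, ∑ m : i, C (a, m) (a, m))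
          = ∑ a : o, (Matrix.of (fun m n => C (a0, m) (a0, n)) : Matrix i i ℂ).trace := by
            exact Finset.sum_congr rfl fun a _ => hrow a
        _ = _ := by rw [Finset.sum_const, Finset.card_univ, nsmul_eq_mul]
    have h2 := hCtr
    rw [h1, ← mul_assoc, hcast, one_mul] at h2
    exact h2
  · -- C = 1 ⊗ₖ σ
    show C = _
    ext ⟨a, m⟩ ⟨b, n⟩
    rw [kroneckerMap_apply]
    by_cases hab : a = b
    · subst hab
      rw [Matrix.one_apply_eq, one_mul, Matrix.of_apply]
      exact key2 a a0 m n
    · rw [Matrix.one_apply_ne hab, zero_mul]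
      exact key1 a b m n hab
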